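/- Let d ≥ 1 and let n_1 ≤ n_2 ≤ ⋯ ≤ n_d be positive integers with n_1 even (so n_1 = min_t n_t). Then there exists an arrangement A of the n_1 × n_2 × ⋯ × n_d matrix with spread(A) ≤ ( Σ_{t=0}^{d−1} C(t, ⌊t/2⌋) ) · ∏_{t=1}^{d} ⌈n_t/2⌉ + n_1/2 − 1, where C(t, ⌊t/2⌋) denotes the binomial coefficient (t choose ⌊t/2⌋). -/

import Mathlib

/-- Two cells of the `n 0 × ⋯ × n (d-1)` matrix lie in a common line:
they agree in all coordinates except (possibly) one. -/
def sameLine {d : ℕ} {n : Fin d → ℕ} (c c' : (i : Fin d) → Fin (n i)) : Prop :=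
  ∃ t : Fin d, ∀ s : Fin d, s ≠ t → c s = c' s

instance {d : ℕ} {n : Fin d → ℕ} (c c' : (i : Fin d) → Fin (n i)) :
    Decidable (sameLine c c') := by
  unfold sameLine; infer_instance

/-- The spread of an arrangement (= bijection from cells to `{0,…,∏ nᵢ − 1}`,
a zero-based version of `{1,…,∏ nᵢ}`): the maximum difference of values over
all pairs of cells lying in a common line. -/
def spread {d : ℕ} {n : Fin d → ℕ}
    (A : ((i : Fin d) → Fin (n i)) ≃ Fin (∏ i, n i)) : ℕ :=
  Finset.sup Finset.univ
    (fun p : ((i : Fin d) → Fin (n i)) × ((i : Fin d) → Fin (n i)) =>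
      if sameLine p.1 p.2 then Nat.dist (A p.1) (A p.2) else 0)


namespace SpreadArr


/-- Hamming weight of a boolean vector. -/
def wt {d : ℕ} (v : Fin d → Bool) : ℕ := ∑ i, if v i then 1 else 0

/-- Rank within the level (weight class), peeling the last coordinate;
vectors with last bit `true` come first. -/
def R : (d : ℕ) → (Fin d → Bool) → ℕ
  | 0, _ => 0
  | d+1, v => (if v (Fin.last d) then 0 else (d+1).choose (wt v) - d.choose (wt v))
      + R d (fun i => v i.castSucc)

/-- Number of vectors of weight `< k`. -/
def S (d k : ℕ) : ℕ := ∑ j ∈ Finset.range k, d.choose j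

/-- Position of a vector in the weight-then-revlex order of the cube. -/
def H (d : ℕ) (v : Fin d → Bool) : ℕ := S d (wt v) + R d v

def beta (d t : ℕ) : ℕ := ∑ j ∈ Finset.Ico t d, j.choose (j / 2)

lemma wt_le {d : ℕ} (v : Fin d → Bool) : wt v ≤ d := by
  unfold wt
  calc ∑ i, (if v i then 1 else 0) ≤ ∑ _i : Fin d, 1 := by
        apply Finset.sum_le_sum; intro i _; split <;> omega
    _ = d := by simp

lemma wt_succ {d : ℕ} (v : Fin (d+1) → Bool) :
    wt v = wt (fun i => v i.castSucc) + (if v (Fin.last d) then 1 else 0) := by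
  unfold wt
  rw [Fin.sum_univ_castSucc]

lemma R_lt {d : ℕ} (v : Fin d → Bool) : R d v < d.choose (wt v) := by
  induction d with
  | zero => simp [R, wt]
  | succ d ih =>
    rw [R]
    have h1 := ih (fun i => v i.castSucc)
    have h2 := wt_succ v
    have h3 : d.choose (wt v) ≤ (d+1).choose (wt v) := Nat.choose_le_choose _ (by omega)
    by_cases hb : v (Fin.last d)
    · simp only [hb, if_true]
      have : d.choose (wt (fun i => v i.castSucc)) ≤ (d+1).choose (wt v) := by
        rw [h2]; simp only [hb, if_true]
        rw [Nat.choose_succ_succ']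
        omega
      omega
    · simp only [Bool.not_eq_true] at hb
      simp only [hb, Bool.false_eq_true, if_false]
      have h4 : wt (fun i => v i.castSucc) = wt v := by rw [h2]; simp [hb]
      rw [h4] at h1
      omega


lemma init_update_last {d : ℕ} (v : Fin (d+1) → Bool) (x : Bool) :
    (fun i : Fin d => (Function.update v (Fin.last d) x) i.castSucc) = (fun i => v i.castSucc) := by
  funext i
  exact Function.update_of_ne (Fin.castSucc_lt_last i).ne _ _

lemma init_update_castSucc {d : ℕ} (v : Fin (d+1) → Bool) (t : Fin d) (x : Bool) :
    (fun i : Fin d => (Function.update v t.castSucc x) i.castSucc)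
      = Function.update (fun i => v i.castSucc) t x := by
  funext i
  by_cases h : i = t
  · subst h; simp [Function.update_self]
  · rw [Function.update_of_ne (by simpa using h), Function.update_of_ne h]

lemma update_last_last {d : ℕ} (v : Fin (d+1) → Bool) (x : Bool) :
    (Function.update v (Fin.last d) x) (Fin.last d) = x := Function.update_self _ _ _

lemma update_castSucc_last {d : ℕ} (v : Fin (d+1) → Bool) (t : Fin d) (x : Bool) :
    (Function.update v t.castSucc x) (Fin.last d) = v (Fin.last d) :=
  Function.update_of_ne (Fin.castSucc_lt_last t).ne' _ _

lemma wt_update {d : ℕ} (v : Fin d → Bool) (t : Fin d) (h : v t = false) :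
    wt (Function.update v t true) = wt v + 1 := by
  unfold wt
  have h1 : (fun i => if (Function.update v t true) i then (1:ℕ) else 0)
      = Function.update (fun i => if v i then 1 else 0) t 1 := by
    funext i
    by_cases hi : i = t
    · subst hi; simp
    · rw [Function.update_of_ne hi, Function.update_of_ne hi]
  rw [h1, Finset.sum_update_of_mem (Finset.mem_univ t)]
  rw [Finset.sum_eq_sum_sdiff_singleton_add (Finset.mem_univ t) (fun i => if v i then (1:ℕ) else 0)]
  simp [h]
  omega

lemma S_succ (d k : ℕ) : S d (k+1) = S d k + d.choose k := Finset.sum_range_succ _ _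

lemma S_mono (d : ℕ) {k l : ℕ} (h : k ≤ l) : S d k ≤ S d l :=
  Finset.sum_le_sum_of_subset (Finset.range_subset_range.mpr h)

lemma H_lt_of_wt_lt {d : ℕ} {v w : Fin d → Bool} (h : wt v < wt w) : H d v < H d w := by
  unfold H
  have h1 : R d v < d.choose (wt v) := R_lt v
  have h2 : S d (wt v) + d.choose (wt v) = S d (wt v + 1) := (S_succ _ _).symm
  have h3 : S d (wt v + 1) ≤ S d (wt w) := S_mono _ h
  omega

lemma R_succ_true {d : ℕ} (v : Fin (d+1) → Bool) (hb : v (Fin.last d) = true) :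
    R (d+1) v = R d (fun i : Fin d => v i.castSucc) := by
  rw [R, hb]; simp

lemma R_succ_false {d : ℕ} (v : Fin (d+1) → Bool) (hb : v (Fin.last d) = false) :
    R (d+1) v = ((d+1).choose (wt v) - d.choose (wt v)) + R d (fun i : Fin d => v i.castSucc) := by
  rw [R, hb]; simp

lemma R_inj : ∀ {d : ℕ} (v w : Fin d → Bool), wt v = wt w → R d v = R d w → v = w := by
  intro d
  induction d with
  | zero => intro v w _ _; funext i; exact i.elim0
  | succ d ih =>
    intro v w hwt hR
    have hv' := wt_succ v
    have hw' := wt_succ w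
    by_cases hb : v (Fin.last d) <;> by_cases hc : w (Fin.last d)
    all_goals simp (failIfUnchanged := false) only [Bool.not_eq_true] at hb hc
    · rw [R_succ_true v hb, R_succ_true w hc] at hR
      simp only [hb, hc, if_true] at hv' hw'
      have heq : (fun i : Fin d => v i.castSucc) = (fun i : Fin d => w i.castSucc) :=
        ih _ _ (by omega) hR
      funext i
      induction i using Fin.lastCases with
      | last => rw [hb, hc]
      | cast j => exact congrFun heq j
    · exfalso
      rw [R_succ_true v hb, R_succ_false w hc] at hR
      simp only [hb, hc, if_true, Bool.false_eq_true, if_false] at hv' hw'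
      have h1 : R d (fun i : Fin d => v i.castSucc) < d.choose (wt (fun i : Fin d => v i.castSucc)) :=
        R_lt _
      have h2 : (d+1).choose (wt w) = d.choose (wt (fun i : Fin d => v i.castSucc)) + d.choose (wt w) := by
        have h3 : wt w = wt (fun i : Fin d => v i.castSucc) + 1 := by omega
        rw [h3, Nat.choose_succ_succ']
      omega
    · exfalso
      rw [R_succ_false v hb, R_succ_true w hc] at hR
      simp only [hb, hc, if_true, Bool.false_eq_true, if_false] at hv' hw'
      have h1 : R d (fun i : Fin d => w i.castSucc) < d.choose (wt (fun i : Fin d => w i.castSucc)) :=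
        R_lt _
      have h2 : (d+1).choose (wt v) = d.choose (wt (fun i : Fin d => w i.castSucc)) + d.choose (wt v) := by
        have h3 : wt v = wt (fun i : Fin d => w i.castSucc) + 1 := by omega
        rw [h3, Nat.choose_succ_succ']
      omega
    · rw [R_succ_false v hb, R_succ_false w hc] at hR
      simp only [hb, hc, Bool.false_eq_true, if_false] at hv' hw'
      have hub : wt v ≤ d := by
        have := wt_le (fun i : Fin d => v i.castSucc); omega
      have h3 : d.choose (wt v) ≤ (d+1).choose (wt v) := Nat.choose_le_choose _ (by omega)
      have heq : (fun i : Fin d => v i.castSucc) = (fun i : Fin d => w i.castSucc) := by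
        apply ih _ _ (by omega)
        rw [hwt] at hR
        omega
      funext i
      induction i using Fin.lastCases with
      | last => rw [hb, hc]
      | cast j => exact congrFun heq j

lemma H_inj {d : ℕ} : Function.Injective (H d) := by
  intro v w h
  have hwt : wt v = wt w := by
    rcases lt_trichotomy (wt v) (wt w) with h1 | h1 | h1
    · exact absurd h (H_lt_of_wt_lt h1).ne
    · exact h1
    · exact absurd h.symm (H_lt_of_wt_lt h1).ne
  apply R_inj v w hwt
  unfold H at h
  rw [hwt] at h
  omega

lemma beta_succ_top {d t : ℕ} (h : t ≤ d) :
    beta (d+1) t = beta d t + d.choose (d / 2) := Finset.sum_Ico_succ_top h _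

lemma R_update_le : ∀ {d : ℕ} (v : Fin d → Bool) (t : Fin d), v t = false →
    d.choose (wt v) + R d (Function.update v t true) ≤ R d v + beta d (t : ℕ) := by
  intro d
  induction d with
  | zero => intro v t; exact t.elim0
  | succ d ih =>
    intro v t ht
    induction t using Fin.lastCases with
    | last =>
      have hwt := wt_succ v
      rw [ht] at hwt
      simp only [Bool.false_eq_true, if_false] at hwt
      have hwtu : wt (Function.update v (Fin.last d) true) = wt v + 1 := wt_update v _ ht
      have hRv : R (d+1) v = ((d+1).choose (wt v) - d.choose (wt v))
          + R d (fun i : Fin d => v i.castSucc) := R_succ_false v ht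
      have hRu : R (d+1) (Function.update v (Fin.last d) true)
          = R d (fun i : Fin d => v i.castSucc) := by
        rw [R_succ_true _ (update_last_last v true), init_update_last]
      have hbeta : beta (d+1) ((Fin.last d : Fin (d+1)) : ℕ) = d.choose (d / 2) := by
        rw [Fin.val_last, beta_succ_top (le_refl d)]
        simp [beta]
      rw [hRv, hRu, hbeta]
      have hub : wt v ≤ d := by
        have := wt_le (fun i : Fin d => v i.castSucc); omega
      have h2 : d.choose (wt v) ≤ d.choose (d / 2) := Nat.choose_le_middle _ _
      have h3 : d.choose (wt v) ≤ (d+1).choose (wt v) := Nat.choose_le_choose _ (by omega)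
      omega
    | cast t' =>
      have htv : (fun i : Fin d => v i.castSucc) t' = false := ht
      have hIH := ih (fun i : Fin d => v i.castSucc) t' htv
      have hwt := wt_succ v
      have hwtu : wt (Function.update v t'.castSucc true) = wt v + 1 := wt_update v _ ht
      have hbeta : beta (d+1) ((t'.castSucc : Fin (d+1)) : ℕ)
          = beta d (t' : ℕ) + d.choose (d / 2) := by
        rw [Fin.coe_castSucc, beta_succ_top (le_of_lt t'.isLt)]
      rw [hbeta]
      by_cases hb : v (Fin.last d) = true
      · have hRv : R (d+1) v = R d (fun i : Fin d => v i.castSucc) := R_succ_true v hb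
        have hRu : R (d+1) (Function.update v t'.castSucc true)
            = R d (Function.update (fun i : Fin d => v i.castSucc) t' true) := by
          rw [R_succ_true _ (by rw [update_castSucc_last]; exact hb), init_update_castSucc]
        rw [hRv, hRu]
        rw [hb] at hwt
        simp at hwt
        have h4 : wt (fun i : Fin d => v i.castSucc) = wt v - 1 := by omega
        have h5 : wt v - 1 + 1 = wt v := by omega
        rw [h4] at hIH
        have hp2 : (d+1).choose (wt v) = d.choose (wt v - 1) + d.choose (wt v) := by
          conv_lhs => rw [← h5]
          rw [Nat.choose_succ_succ', h5]
        have h6 : d.choose (wt v) ≤ d.choose (d/2) := Nat.choose_le_middle _ _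
        omega
      · simp only [Bool.not_eq_true] at hb
        have hRv : R (d+1) v = ((d+1).choose (wt v) - d.choose (wt v))
            + R d (fun i : Fin d => v i.castSucc) := R_succ_false v hb
        have hRu : R (d+1) (Function.update v t'.castSucc true)
            = ((d+1).choose (wt v + 1) - d.choose (wt v + 1))
              + R d (Function.update (fun i : Fin d => v i.castSucc) t' true) := by
          rw [R_succ_false _ (by rw [update_castSucc_last]; exact hb), init_update_castSucc, hwtu]
        rw [hRv, hRu]
        rw [hb] at hwt
        simp only [Bool.false_eq_true, if_false] at hwt
        have h4 : wt (fun i : Fin d => v i.castSucc) = wt v := by omega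
        rw [h4] at hIH
        have hub : wt v ≤ d := by
          have := wt_le (fun i : Fin d => v i.castSucc); omega
        have hp : (d+1).choose (wt v + 1) = d.choose (wt v) + d.choose (wt v + 1) :=
          Nat.choose_succ_succ' _ _
        have h2 : d.choose (wt v + 1) ≤ d.choose (d / 2) := Nat.choose_le_middle _ _
        have h3 : d.choose (wt v) ≤ (d+1).choose (wt v) := Nat.choose_le_choose _ (by omega)
        have h6 : d.choose (wt v) ≤ d.choose (d / 2) := Nat.choose_le_middle _ _
        omega

lemma H_update_le {d : ℕ} (v : Fin d → Bool) (t : Fin d) (h : v t = false) :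
    H d (Function.update v t true) ≤ H d v + beta d (t : ℕ) := by
  unfold H
  rw [wt_update v t h, S_succ]
  have := R_update_le v t h
  omega

lemma H_lt_update {d : ℕ} (v : Fin d → Bool) (t : Fin d) (h : v t = false) :
    H d v < H d (Function.update v t true) :=
  H_lt_of_wt_lt (by rw [wt_update v t h]; omega)


/-- Mixed–radix rank, coordinate 0 least significant. -/
def rk : (d : ℕ) → (m : Fin d → ℕ) → ((i : Fin d) → ℕ) → ℕ
  | 0, _, _ => 0
  | d+1, m, a => a 0 + m 0 * rk d (fun i => m i.succ) (fun i => a i.succ)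

lemma rk_lt : ∀ {d : ℕ} (m : Fin d → ℕ) (a : (i : Fin d) → ℕ),
    (∀ i, a i < m i) → rk d m a < ∏ i, m i := by
  intro d
  induction d with
  | zero => intro m a _; simp [rk]
  | succ d ih =>
    intro m a ha
    rw [rk, Fin.prod_univ_succ]
    have h1 : rk d (fun i => m i.succ) (fun i => a i.succ) < ∏ i : Fin d, m i.succ :=
      ih _ _ (fun i => ha i.succ)
    have h2 : a 0 < m 0 := ha 0
    calc a 0 + m 0 * rk d (fun i => m i.succ) (fun i => a i.succ)
        < m 0 * (rk d (fun i => m i.succ) (fun i => a i.succ) + 1) := by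
          rw [Nat.mul_add, Nat.mul_one]; omega
      _ ≤ m 0 * ∏ i : Fin d, m i.succ := Nat.mul_le_mul_left _ (by omega)

lemma rk_inj : ∀ {d : ℕ} (m : Fin d → ℕ) (a b : (i : Fin d) → ℕ),
    (∀ i, a i < m i) → (∀ i, b i < m i) → rk d m a = rk d m b → a = b := by
  intro d
  induction d with
  | zero => intro m a b _ _ _; funext i; exact i.elim0
  | succ d ih =>
    intro m a b ha hb h
    rw [rk, rk] at h
    have hm0 : 0 < m 0 := lt_of_le_of_lt (Nat.zero_le _) (ha 0)
    have h0 : a 0 = b 0 := by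
      have e1 : (a 0 + m 0 * rk d (fun i => m i.succ) (fun i => a i.succ)) % m 0 = a 0 := by
        rw [Nat.add_mul_mod_self_left, Nat.mod_eq_of_lt (ha 0)]
      have e2 : (b 0 + m 0 * rk d (fun i => m i.succ) (fun i => b i.succ)) % m 0 = b 0 := by
        rw [Nat.add_mul_mod_self_left, Nat.mod_eq_of_lt (hb 0)]
      rw [← e1, ← e2, h]
    have htails : (fun i : Fin d => a i.succ) = (fun i : Fin d => b i.succ) := by
      apply ih _ _ _ (fun i => ha i.succ) (fun i => hb i.succ)
      have := Nat.eq_of_mul_eq_mul_left hm0 (show m 0 * rk d (fun i => m i.succ) (fun i => a i.succ)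
        = m 0 * rk d (fun i => m i.succ) (fun i => b i.succ) by omega)
      exact this
    funext i
    induction i using Fin.cases with
    | zero => exact h0
    | succ j => exact congrFun htails j

lemma rk_dist_zero {d : ℕ} (m : Fin (d+1) → ℕ) (a b : (i : Fin (d+1)) → ℕ)
    (h : ∀ i : Fin d, a i.succ = b i.succ) :
    Nat.dist (rk (d+1) m a) (rk (d+1) m b) = Nat.dist (a 0) (b 0) := by
  rw [rk, rk]
  have : (fun i : Fin d => a i.succ) = (fun i : Fin d => b i.succ) := funext h
  rw [this, Nat.dist_add_add_right]

lemma dist_mul_add (x y r s M : ℕ) :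
    Nat.dist (x * M + r) (y * M + s) ≤ Nat.dist x y * M + Nat.dist r s := by
  calc Nat.dist (x * M + r) (y * M + s)
      ≤ Nat.dist (x * M + r) (y * M + r) + Nat.dist (y * M + r) (y * M + s) :=
        Nat.dist.triangle_inequality _ _ _
    _ = Nat.dist x y * M + Nat.dist r s := by
        rw [Nat.dist_add_add_right, Nat.dist_add_add_left, Nat.dist_mul_right]


lemma exists_equiv_dist {α : Type*} [Fintype α] (key : α → ℕ)
    (hinj : Function.Injective key) {N : ℕ} (hN : Fintype.card α = N) :
    ∃ A : α ≃ Fin N, ∀ c c' : α, Nat.dist (A c) (A c') ≤ Nat.dist (key c) (key c') := by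
  letI : LinearOrder α := LinearOrder.lift' key hinj
  have hle : ∀ c c' : α, c ≤ c' ↔ key c ≤ key c' := fun _ _ => Iff.rfl
  have hlt : ∀ c c' : α, c < c' ↔ key c < key c' := by
    intro c c'
    rw [lt_iff_le_not_ge, lt_iff_le_not_ge, hle, hle]
  let e := monoEquivOfFin α hN
  let f : α ≃o Fin N := e.symm
  have key_half : ∀ c c' : α, key c ≤ key c' →
      ((f c' : ℕ) - (f c : ℕ)) ≤ key c' - key c := by
    intro c c' h
    have hcc : c ≤ c' := (hle c c').mpr h
    have h1 : f c ≤ f c' := f.le_iff_le.mpr hcc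
    have h2 : (Finset.Ioc (f c) (f c')).card = (f c' : ℕ) - (f c : ℕ) := Fin.card_Ioc _ _
    have h3 : (Finset.univ.filter fun x : α => c < x ∧ x ≤ c').card
        = (Finset.Ioc (f c) (f c')).card := by
      apply Finset.card_bij (fun x _ => f x)
      · intro x hx
        simp only [Finset.mem_filter] at hx
        rw [Finset.mem_Ioc]
        exact ⟨f.lt_iff_lt.mpr hx.2.1, f.le_iff_le.mpr hx.2.2⟩
      · intro x hx y hy hxy
        exact f.injective hxy
      · intro y hy
        refine ⟨f.symm y, ?_, f.apply_symm_apply y⟩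
        rw [Finset.mem_Ioc] at hy
        simp only [Finset.mem_filter, Finset.mem_univ, true_and]
        constructor
        · rw [← f.lt_iff_lt, f.apply_symm_apply]; exact hy.1
        · rw [← f.le_iff_le, f.apply_symm_apply]; exact hy.2
    have h4 : (Finset.univ.filter fun x : α => c < x ∧ x ≤ c').card
        ≤ (Finset.Ioc (key c) (key c')).card := by
      apply Finset.card_le_card_of_injOn key
      · intro x hx
        simp only [Finset.mem_coe, Finset.mem_filter] at hx
        rw [Finset.mem_coe, Finset.mem_Ioc]
        exact ⟨(hlt c x).mp hx.2.1, (hle x c').mp hx.2.2⟩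
      · exact fun x _ y _ hxy => hinj hxy
    have h5 : (Finset.Ioc (key c) (key c')).card = key c' - key c := Nat.card_Ioc _ _
    omega
  refine ⟨f.toEquiv, ?_⟩
  intro c c'
  show Nat.dist (f c : ℕ) (f c' : ℕ) ≤ Nat.dist (key c) (key c')
  rcases le_total (key c) (key c') with h | h
  · have h1 : f c ≤ f c' := f.le_iff_le.mpr ((hle c c').mpr h)
    have h2 := key_half c c' h
    have hv : (f c : ℕ) ≤ (f c' : ℕ) := h1
    rw [Nat.dist_eq_sub_of_le hv, Nat.dist_eq_sub_of_le h]
    exact h2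
  · have h1 : f c' ≤ f c := f.le_iff_le.mpr ((hle c' c).mpr h)
    have h2 := key_half c' c h
    have hv : (f c' : ℕ) ≤ (f c : ℕ) := h1
    rw [Nat.dist_eq_sub_of_le_right hv, Nat.dist_eq_sub_of_le_right h]
    exact h2


lemma beta_def (d t : ℕ) : beta d t = ∑ j ∈ Finset.Ico t d, j.choose (j / 2) := rfl

lemma beta_pos {d t : ℕ} (h : t < d) : 0 < beta d t := by
  rw [beta_def]
  have h0 : t ∈ Finset.Ico t d := by simp [h]
  calc 0 < t.choose (t / 2) := Nat.choose_pos (by omega)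
    _ ≤ _ := Finset.single_le_sum (f := fun j => j.choose (j / 2)) (fun i _ => Nat.zero_le _) h0

lemma beta_lt_of_lt {d t : ℕ} (h : 0 < t) (h2 : t ≤ d) : beta d t + 1 ≤ beta d 0 := by
  have hsplit : beta d 0 = (∑ j ∈ Finset.Ico 0 t, j.choose (j / 2)) + beta d t := by
    rw [beta_def, beta_def, Finset.sum_Ico_consecutive _ (Nat.zero_le t) h2]
  have h0 : 0 ∈ Finset.Ico 0 t := by simp [h]
  have : 1 ≤ ∑ j ∈ Finset.Ico 0 t, j.choose (j / 2) := by
    calc 1 = Nat.choose 0 (0 / 2) := rfl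
      _ ≤ _ := Finset.single_le_sum (f := fun j => j.choose (j / 2)) (fun i _ => Nat.zero_le _) h0
  omega

lemma dist_lt_of_lt {a b M : ℕ} (ha : a < M) (hb : b < M) : Nat.dist a b ≤ M - 1 := by
  rcases le_total a b with h | h
  · rw [Nat.dist_eq_sub_of_le h]; omega
  · rw [Nat.dist_eq_sub_of_le_right h]; omega

lemma main_aux {d : ℕ} (n : Fin (d+1) → ℕ) (hn : ∀ i, 0 < n i) :
    ∃ A : ((i : Fin (d+1)) → Fin (n i)) ≃ Fin (∏ i, n i),
      ∀ c c', sameLine c c' →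
        Nat.dist (A c) (A c')
          ≤ beta (d+1) 0 * (∏ i, ((n i + 1) / 2)) + ((n 0 + 1) / 2 - 1) := by
  set m : Fin (d+1) → ℕ := fun i => (n i + 1) / 2 with hm_def
  set M : ℕ := ∏ i, m i with hM_def
  set eps : ((i : Fin (d+1)) → Fin (n i)) → (Fin (d+1) → Bool) :=
    fun c t => decide ((c t : ℕ) % 2 = 1) with heps_def
  set dig : ((i : Fin (d+1)) → Fin (n i)) → ((i : Fin (d+1)) → ℕ) :=
    fun c i => (c i : ℕ) / 2 with hdig_def
  set key : ((i : Fin (d+1)) → Fin (n i)) → ℕ :=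
    fun c => H (d+1) (eps c) * M + rk (d+1) m (dig c) with hkey_def
  have hm_pos : ∀ i, 0 < m i := by
    intro i; have := hn i; simp only [hm_def]; omega
  have hM_pos : 0 < M := Finset.prod_pos (fun i _ => hm_pos i)
  have hdig_lt : ∀ c i, dig c i < m i := by
    intro c i
    have h1 : (c i : ℕ) < n i := (c i).isLt
    simp only [hdig_def, hm_def]
    omega
  have hrk_lt : ∀ c, rk (d+1) m (dig c) < M := fun c => rk_lt m (dig c) (hdig_lt c)
  -- injectivity of the key
  have key_inj : Function.Injective key := by
    intro c c' h
    simp only [hkey_def] at h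
    have h1 : rk (d+1) m (dig c) = rk (d+1) m (dig c') := by
      have e1 : (H (d+1) (eps c) * M + rk (d+1) m (dig c)) % M = rk (d+1) m (dig c) := by
        rw [Nat.add_comm, Nat.add_mul_mod_self_right, Nat.mod_eq_of_lt (hrk_lt c)]
      have e2 : (H (d+1) (eps c') * M + rk (d+1) m (dig c')) % M = rk (d+1) m (dig c') := by
        rw [Nat.add_comm, Nat.add_mul_mod_self_right, Nat.mod_eq_of_lt (hrk_lt c')]
      rw [← e1, ← e2, h]
    have h2 : H (d+1) (eps c) = H (d+1) (eps c') := by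
      have := hrk_lt c; have := hrk_lt c'
      have hmul : H (d+1) (eps c) * M = H (d+1) (eps c') * M := by omega
      exact Nat.eq_of_mul_eq_mul_right hM_pos hmul
    have heq1 : eps c = eps c' := H_inj h2
    have heq2 : dig c = dig c' := rk_inj m _ _ (hdig_lt c) (hdig_lt c') h1
    funext i
    have e3 : (c i : ℕ) % 2 = (c' i : ℕ) % 2 := by
      have := congrFun heq1 i
      simp only [heps_def, decide_eq_decide] at this
      omega
    have e4 : (c i : ℕ) / 2 = (c' i : ℕ) / 2 := congrFun heq2 i
    exact Fin.ext (by omega)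
  -- key distance bound on lines
  have key_dist : ∀ c c', sameLine c c' →
      Nat.dist (key c) (key c') ≤ beta (d+1) 0 * M + (m 0 - 1) := by
    intro c c' hline
    obtain ⟨t, hts⟩ := hline
    have hb1 : 0 < beta (d+1) 0 := beta_pos (by omega)
    have hMle : M ≤ beta (d+1) 0 * M := Nat.le_mul_of_pos_left M hb1
    by_cases hpar : (c t : ℕ) % 2 = (c' t : ℕ) % 2
    · -- same parity at t : the cube vertex is unchanged
      have heq : eps c = eps c' := by
        funext s
        by_cases hs : s = t
        · subst hs; simp only [heps_def, hpar]
        · simp only [heps_def, hts s hs]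
      simp only [hkey_def, heq]
      rw [Nat.dist_add_add_left]
      have := dist_lt_of_lt (hrk_lt c) (hrk_lt c')
      have := hm_pos 0
      omega
    · -- parity flips at t
      -- wlog via an auxiliary claim applied to each orientation
      have main : ∀ a b : ((i : Fin (d+1)) → Fin (n i)),
          (∀ s, s ≠ t → a s = b s) → ((a t : ℕ) % 2 = 0) → ((b t : ℕ) % 2 = 1) →
          Nat.dist (key a) (key b) ≤ beta (d+1) 0 * M + (m 0 - 1) := by
        intro a b habs ha hb
        have hupd : eps b = Function.update (eps a) t true := by
          funext s
          by_cases hs : s = t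
          · subst hs
            rw [Function.update_self]
            simp only [heps_def, hb, decide_eq_true_eq]
          · rw [Function.update_of_ne hs]
            simp only [heps_def, habs s hs]
        have hat : eps a t = false := by
          simp only [heps_def, ha]
          simp
        have hH1 : H (d+1) (eps a) < H (d+1) (eps b) := by
          rw [hupd]; exact H_lt_update _ _ hat
        have hH2 : H (d+1) (eps b) ≤ H (d+1) (eps a) + beta (d+1) (t : ℕ) := by
          rw [hupd]; exact H_update_le _ _ hat
        have hHd : Nat.dist (H (d+1) (eps a)) (H (d+1) (eps b)) ≤ beta (d+1) (t : ℕ) := by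
          rw [Nat.dist_eq_sub_of_le (le_of_lt hH1)]; omega
        have hkd : Nat.dist (key a) (key b)
            ≤ Nat.dist (H (d+1) (eps a)) (H (d+1) (eps b)) * M
              + Nat.dist (rk (d+1) m (dig a)) (rk (d+1) m (dig b)) := by
          simp only [hkey_def]
          exact dist_mul_add _ _ _ _ _
        by_cases ht0 : (t : ℕ) = 0
        · -- coordinate 0 : only the least-significant digit moves
          have ht00 : t = 0 := Fin.ext ht0
          have hrd : Nat.dist (rk (d+1) m (dig a)) (rk (d+1) m (dig b))
              = Nat.dist (dig a 0) (dig b 0) := by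
            apply rk_dist_zero
            intro i
            have hne : i.succ ≠ t := by
              rw [ht00]; exact Fin.succ_ne_zero i
            simp only [hdig_def, habs i.succ hne]
          have hd0 : Nat.dist (dig a 0) (dig b 0) ≤ m 0 - 1 :=
            dist_lt_of_lt (hdig_lt a 0) (hdig_lt b 0)
          have hbt : beta (d+1) (t : ℕ) = beta (d+1) 0 := by rw [ht0]
          calc Nat.dist (key a) (key b)
              ≤ Nat.dist (H (d+1) (eps a)) (H (d+1) (eps b)) * M
                + Nat.dist (rk (d+1) m (dig a)) (rk (d+1) m (dig b)) := hkd
            _ ≤ beta (d+1) 0 * M + (m 0 - 1) := by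
                rw [hrd]
                have : Nat.dist (H (d+1) (eps a)) (H (d+1) (eps b)) * M
                    ≤ beta (d+1) 0 * M := by
                  apply Nat.mul_le_mul_right
                  rw [← hbt]; exact hHd
                omega
        · -- other coordinates : crude bound on the low part
          have hrd : Nat.dist (rk (d+1) m (dig a)) (rk (d+1) m (dig b)) ≤ M - 1 :=
            dist_lt_of_lt (hrk_lt a) (hrk_lt b)
          have hblt : beta (d+1) (t : ℕ) + 1 ≤ beta (d+1) 0 :=
            beta_lt_of_lt (by omega) (by have := t.isLt; omega)
          have hmul : (beta (d+1) (t : ℕ) + 1) * M ≤ beta (d+1) 0 * M :=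
            Nat.mul_le_mul_right _ hblt
          have hexp : (beta (d+1) (t : ℕ) + 1) * M = beta (d+1) (t : ℕ) * M + M := by ring
          have hmul2 : Nat.dist (H (d+1) (eps a)) (H (d+1) (eps b)) * M
              ≤ beta (d+1) (t : ℕ) * M := Nat.mul_le_mul_right _ hHd
          have := hm_pos 0
          omega
      rcases Nat.mod_two_eq_zero_or_one (c t : ℕ) with h1 | h1
      · have h2 : (c' t : ℕ) % 2 = 1 := by
          rcases Nat.mod_two_eq_zero_or_one (c' t : ℕ) with h2 | h2
          · exact absurd (h1.trans h2.symm) hpar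
          · exact h2
        exact main c c' hts h1 h2
      · have h2 : (c' t : ℕ) % 2 = 0 := by
          rcases Nat.mod_two_eq_zero_or_one (c' t : ℕ) with h2 | h2
          · exact h2
          · exact absurd (h1.trans h2.symm) hpar
        rw [Nat.dist_comm]
        exact main c' c (fun s hs => (hts s hs).symm) h2 h1
  -- build the arrangement
  have hcard : Fintype.card ((i : Fin (d+1)) → Fin (n i)) = ∏ i, n i := by
    simp [Fintype.card_pi]
  obtain ⟨A, hA⟩ := exists_equiv_dist key key_inj hcard
  refine ⟨A, fun c c' hline => ?_⟩
  calc Nat.dist (A c) (A c') ≤ Nat.dist (key c) (key c') := hA c c'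
    _ ≤ beta (d+1) 0 * M + (m 0 - 1) := key_dist c c' hline
end SpreadArr

/-- For monotone positive dimensions with `n 0` (the smallest) even, there is
an arrangement of spread at most
`B(K₂^d) · ∏ ⌈nₜ/2⌉ + n 0 / 2 − 1`, where `B(K₂^d) = Σ_{t=0}^{d−1} C(t, ⌊t/2⌋)`. -/
theorem exists_spread_upper_bound_even (d : ℕ) (hd : 1 ≤ d) (n : Fin d → ℕ)
    (hn : ∀ i, 0 < n i) (hmono : Monotone n)
    (heven : Even (n ⟨0, hd⟩)) :
    ∃ A : ((i : Fin d) → Fin (n i)) ≃ Fin (∏ i, n i),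
      spread A ≤
        ((Finset.range d).sum fun t => t.choose (t / 2)) * (∏ i, ((n i + 1) / 2)) +
          n ⟨0, hd⟩ / 2 - 1 := by
  obtain ⟨d', rfl⟩ : ∃ d', d = d' + 1 := ⟨d - 1, by omega⟩
  obtain ⟨A, hA⟩ := SpreadArr.main_aux n hn
  refine ⟨A, ?_⟩
  have h0 : (⟨0, hd⟩ : Fin (d' + 1)) = 0 := rfl
  have hbeta : SpreadArr.beta (d' + 1) 0 = (Finset.range (d' + 1)).sum fun t => t.choose (t / 2) := by
    rw [SpreadArr.beta_def, Finset.range_eq_Ico]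
  have hm0 : (n 0 + 1) / 2 = n 0 / 2 := by
    obtain ⟨k, hk⟩ := heven
    rw [h0] at hk
    omega
  have hm0pos : 0 < (n 0 + 1) / 2 := by have := hn 0; omega
  apply Finset.sup_le
  intro p _
  split
  · rename_i hline
    have := hA p.1 p.2 hline
    rw [h0, ← hm0, ← hbeta]
    omega
  · omega
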